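/- Let A be a bounded self-adjoint operator on a Hilbert space H, B a bounded operator from K to H, and C a bounded self-adjoint operator on K. If A ≥ ε·id_H for some ε > 0, then with λ = 2‖B‖²/ε + ε/2 + ‖C‖, the block operator [[A, B],[B*, C + λ·id_K]] satisfies [[A, B],[B*, C + λ·id_K]] ≥ (ε/2)·id_{H⊕K}. -/

import Mathlib

open ContinuousLinearMap

/-- If `A ≥ ε·id_H`, then with `λ = 2‖B‖²/ε + ε/2 + ‖C‖` the block operator
`[[A, B],[B*, C + λ·id_K]]` is `≥ (ε/2)·id_{H⊕K}` (as a quadratic form). -/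
theorem block_operator_lower_bound
    {H K : Type*}
    [NormedAddCommGroup H] [InnerProductSpace ℂ H] [CompleteSpace H]
    [NormedAddCommGroup K] [InnerProductSpace ℂ K] [CompleteSpace K]
    (A : H →L[ℂ] H) (B : K →L[ℂ] H) (C : K →L[ℂ] K)
    (hA : IsSelfAdjoint A) (hC : IsSelfAdjoint C)
    (ε : ℝ) (hε : 0 < ε)
    (hAlb : ∀ h : H, ε * ‖h‖ ^ 2 ≤ (inner ℂ (A h) h : ℂ).re) :
    ∀ (h : H) (k : K),
      ε / 2 * (‖h‖ ^ 2 + ‖k‖ ^ 2) ≤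
        ((inner ℂ (A h + B k) h : ℂ) +
          (inner ℂ ((ContinuousLinearMap.adjoint B) h + C k
            + (2 * ‖B‖ ^ 2 / ε + ε / 2 + ‖C‖) • k) k : ℂ)).re := by
  intro h k
  have h1 : ε * ‖h‖ ^ 2 ≤ (inner ℂ (A h) h : ℂ).re := hAlb h
  have hBk : -(‖B‖ * ‖k‖ * ‖h‖) ≤ (inner ℂ (B k) h : ℂ).re := by
    have h2 : |(inner ℂ (B k) h : ℂ).re| ≤ ‖B k‖ * ‖h‖ :=
      (RCLike.abs_re_le_norm _).trans (norm_inner_le_norm (𝕜 := ℂ) (B k) h)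
    have h3 : ‖B k‖ * ‖h‖ ≤ ‖B‖ * ‖k‖ * ‖h‖ :=
      mul_le_mul_of_nonneg_right (B.le_opNorm k) (norm_nonneg h)
    linarith [neg_abs_le ((inner ℂ (B k) h : ℂ).re)]
  have hadj : (inner ℂ ((adjoint B) h) k : ℂ).re = (inner ℂ (B k) h : ℂ).re := by
    rw [adjoint_inner_left]
    exact inner_re_symm (𝕜 := ℂ) h (B k)
  have hCk : -(‖C‖ * ‖k‖ ^ 2) ≤ (inner ℂ (C k) k : ℂ).re := by
    have h2 : |(inner ℂ (C k) k : ℂ).re| ≤ ‖C k‖ * ‖k‖ :=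
      (RCLike.abs_re_le_norm _).trans (norm_inner_le_norm (𝕜 := ℂ) (C k) k)
    have h3 : ‖C k‖ * ‖k‖ ≤ ‖C‖ * ‖k‖ * ‖k‖ :=
      mul_le_mul_of_nonneg_right (C.le_opNorm k) (norm_nonneg k)
    nlinarith [neg_abs_le ((inner ℂ (C k) k : ℂ).re), sq_nonneg ‖k‖]
  have hsm : (inner ℂ ((2 * ‖B‖ ^ 2 / ε + ε / 2 + ‖C‖) • k) k : ℂ).re
      = (2 * ‖B‖ ^ 2 / ε + ε / 2 + ‖C‖) * ‖k‖ ^ 2 := by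
    rw [RCLike.real_smul_eq_coe_smul (K := ℂ), inner_smul_real_left]
    have hk2 : (inner ℂ k k : ℂ).re = ‖k‖ ^ 2 := by simpa using inner_self_eq_norm_sq (𝕜 := ℂ) k
    have hk0 : (inner ℂ k k : ℂ).im = 0 := by
      rw [← RCLike.im_to_complex]
      exact inner_self_im k
    simp [← Complex.ofReal_pow, hk2, hk0]
  have hkey : (ε * ‖h‖ - 2 * ‖B‖ * ‖k‖) ^ 2 ≥ 0 := sq_nonneg _
  have hdiv : 2 * ‖B‖ ^ 2 / ε * ε = 2 * ‖B‖ ^ 2 := by field_simp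
  simp only [inner_add_left, Complex.add_re]
  rw [hadj, hsm]
  nlinarith [mul_pos hε hε, sq_nonneg ‖h‖, sq_nonneg ‖k‖, hε]
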